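/- Let Λ̄ = 𝔽_p[[T]] and suppose M is a discrete Λ̄-module which is the sum of the images of two homomorphisms φ, φ' from Λ̄^∨ to M. If dim_{𝔽_p} M^Γ = 2 (where M^Γ = M[T]), then M^∨ is a free Λ̄-module of rank 2. -/

import Mathlib

section PontryaginDual

variable (p : ℕ) [Fact p.Prime] (M : Type) [AddCommGroup M] [Module (ZMod p) M]
  [Module (PowerSeries (ZMod p)) M] [SMulCommClass (ZMod p) (PowerSeries (ZMod p)) M]

/-- Multiplication by `a ∈ Λ̄ = 𝔽_p[[T]]` as an `𝔽_p`-linear map on `M`. -/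
noncomputable def smulLM (a : PowerSeries (ZMod p)) : M →ₗ[ZMod p] M where
  toFun m := a • m
  map_add' x y := smul_add a x y
  map_smul' c m := (smul_comm c a m).symm

/-- The Pontryagin dual of a discrete `Λ̄`-module `M` (an `𝔽_p`-vector space), namely its
full `𝔽_p`-linear dual. -/
def PDual : Type := M →ₗ[ZMod p] ZMod p

instance : AddCommGroup (PDual p M) :=
  inferInstanceAs (AddCommGroup (M →ₗ[ZMod p] ZMod p))

/-- A `PDual` element as a bona fide linear map. -/
def PDual.lin (f : PDual p M) : M →ₗ[ZMod p] ZMod p := f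

/-- The `Λ̄`-module structure on the Pontryagin dual: `(a • f) m = f (a • m)`. -/
noncomputable instance : Module (PowerSeries (ZMod p)) (PDual p M) where
  smul a f := LinearMap.comp (PDual.lin p M f) (smulLM p M a)
  one_smul f := LinearMap.ext fun m => by
    show PDual.lin p M f ((1 : PowerSeries (ZMod p)) • m) = PDual.lin p M f m
    rw [one_smul]
  mul_smul a b f := LinearMap.ext fun m => by
    show PDual.lin p M f ((a * b) • m) = PDual.lin p M f (b • a • m)
    rw [mul_comm, mul_smul]
  smul_zero a := LinearMap.ext fun m => rfl
  smul_add a f g := LinearMap.ext fun m => rfl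
  add_smul a b f := LinearMap.ext fun m => by
    show PDual.lin p M f ((a + b) • m) =
      PDual.lin p M f (a • m) + PDual.lin p M f (b • m)
    rw [add_smul, map_add]
  zero_smul f := LinearMap.ext fun m => by
    show PDual.lin p M f ((0 : PowerSeries (ZMod p)) • m) = 0
    rw [zero_smul, map_zero]

/-- The `𝔽_p`-subspace of `M` killed by `a ∈ Λ̄`; for `a = T^{p^n}` these are the
`Γ_n`-invariants `M^{Γ_n}` of the corresponding discrete `Γ`-module (and for `a = T` the
`Γ`-invariants `M^Γ = M[T]`). -/
def invariantsKer (a : PowerSeries (ZMod p)) : Submodule (ZMod p) M where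
  carrier := {m | a • m = 0}
  zero_mem' := smul_zero a
  add_mem' := by
    intro x y hx hy
    show a • (x + y) = 0
    rw [smul_add, hx, hy, add_zero]
  smul_mem' := by
    intro c m hm
    show a • c • m = 0
    rw [← smul_comm c a m, hm, smul_zero]

/-- The Pontryagin dual `Λ̄^∨` of `Λ̄ = 𝔽_p[[T]]` itself, realized as
`𝔽_p((T))/𝔽_p[[T]]`. -/
def PontLambdaDual : Type :=
  LaurentSeries (ZMod p) ⧸
    LinearMap.range (Algebra.linearMap (PowerSeries (ZMod p)) (LaurentSeries (ZMod p)))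

noncomputable instance : AddCommGroup (PontLambdaDual p) :=
  inferInstanceAs (AddCommGroup (LaurentSeries (ZMod p) ⧸
    LinearMap.range (Algebra.linearMap (PowerSeries (ZMod p)) (LaurentSeries (ZMod p)))))

noncomputable instance : Module (PowerSeries (ZMod p)) (PontLambdaDual p) :=
  inferInstanceAs (Module (PowerSeries (ZMod p)) (LaurentSeries (ZMod p) ⧸
    LinearMap.range (Algebra.linearMap (PowerSeries (ZMod p)) (LaurentSeries (ZMod p)))))

end PontryaginDual


namespace DFRT

variable (p : ℕ) [Fact p.Prime]

theorem zmodSmul {N : Type*} [AddCommGroup N] [Module (ZMod p) N] (c : ZMod p) (x : N) :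
    c • x = c.val • x := by
  rw [← Nat.cast_smul_eq_nsmul (ZMod p), ZMod.natCast_val, ZMod.cast_id]

theorem csmulK (c : ZMod p) (x : LaurentSeries (ZMod p)) :
    ((PowerSeries.C c : PowerSeries (ZMod p)) • x) = c • x := by
  rw [Algebra.smul_def, LaurentSeries.coe_algebraMap, HahnSeries.ofPowerSeries_C,
    HahnSeries.C_mul_eq_smul]

noncomputable instance : IsScalarTower (ZMod p) (PowerSeries (ZMod p)) (LaurentSeries (ZMod p)) :=
  ⟨fun c a x => by rw [← csmulK, PowerSeries.smul_eq_C_mul]; exact mul_smul _ a x⟩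

noncomputable instance : Module (ZMod p) (PontLambdaDual p) :=
  inferInstanceAs (Module (ZMod p) (LaurentSeries (ZMod p) ⧸
    LinearMap.range (Algebra.linearMap (PowerSeries (ZMod p)) (LaurentSeries (ZMod p)))))

noncomputable instance : IsScalarTower (ZMod p) (PowerSeries (ZMod p)) (PontLambdaDual p) :=
  inferInstanceAs (IsScalarTower (ZMod p) (PowerSeries (ZMod p)) (LaurentSeries (ZMod p) ⧸
    LinearMap.range (Algebra.linearMap (PowerSeries (ZMod p)) (LaurentSeries (ZMod p)))))

/-- The quotient map onto `Λ̄^∨`. -/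
noncomputable def pi : LaurentSeries (ZMod p) →ₗ[PowerSeries (ZMod p)] PontLambdaDual p :=
  (LinearMap.range (Algebra.linearMap (PowerSeries (ZMod p)) (LaurentSeries (ZMod p)))).mkQ

theorem pi_surjective : Function.Surjective (pi p) :=
  Submodule.mkQ_surjective _

theorem pi_coe (a : PowerSeries (ZMod p)) :
    pi p (algebraMap (PowerSeries (ZMod p)) (LaurentSeries (ZMod p)) a) = 0 :=
  (Submodule.Quotient.mk_eq_zero _).mpr ⟨a, rfl⟩

/-- `e n` is the class of `T^{-(n+1)}` in `Λ̄^∨`. -/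
noncomputable def e (n : ℕ) : PontLambdaDual p :=
  pi p (HahnSeries.single (-(n + 1) : ℤ) 1)

theorem key_decomp (a : PowerSeries (ZMod p)) (n : ℕ) :
    (algebraMap (PowerSeries (ZMod p)) (LaurentSeries (ZMod p)) a) *
        HahnSeries.single (-(n + 1) : ℤ) 1
      = algebraMap (PowerSeries (ZMod p)) (LaurentSeries (ZMod p))
          (PowerSeries.mk fun j => PowerSeries.coeff (j + n + 1) a)
        + ∑ k ∈ Finset.range (n + 1),
            PowerSeries.coeff k a • HahnSeries.single ((k : ℤ) - (n + 1)) 1 := by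
  ext m
  have hm : m = (m + (n + 1)) + (-(n + 1) : ℤ) := by ring
  rw [hm, HahnSeries.coeff_mul_single_add, mul_one,
    show m + (n + 1) + (-(n + 1) : ℤ) = m from by ring]
  rw [HahnSeries.coeff_add]
  rw [show ((∑ k ∈ Finset.range (n + 1),
      PowerSeries.coeff k a • HahnSeries.single ((k : ℤ) - (n + 1)) 1 :
        LaurentSeries (ZMod p))).coeff m
    = ∑ k ∈ Finset.range (n + 1),
        (PowerSeries.coeff k a • (HahnSeries.single ((k : ℤ) - (n + 1)) 1 :
          LaurentSeries (ZMod p))).coeff m from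
    map_sum (HahnSeries.coeff.addMonoidHom m) _ _]
  simp only [HahnSeries.coeff_smul, HahnSeries.coeff_single, LaurentSeries.coe_algebraMap,
    PowerSeries.coeff_coe, smul_eq_mul, mul_ite, mul_one, mul_zero]
  by_cases h0 : (0:ℤ) ≤ m
  · rw [if_neg (by omega), if_neg (by omega), PowerSeries.coeff_mk,
      show (m + (n + 1) : ℤ).natAbs = m.natAbs + n + 1 from by omega,
      Finset.sum_eq_zero (fun k hk => if_neg (by have := Finset.mem_range.mp hk; omega)),
      add_zero]
  · by_cases h1 : m + (n + 1 : ℤ) < 0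
    · rw [if_pos h1, if_pos (by omega),
        Finset.sum_eq_zero (fun k hk => if_neg (by omega)), add_zero]
    · rw [if_neg h1, if_pos (by omega), zero_add,
        Finset.sum_eq_single (m + (n + 1) : ℤ).natAbs
          (fun b _ hbne => if_neg (by omega))
          (fun h => absurd (Finset.mem_range.mpr (by omega)) h),
        if_pos (by omega)]

theorem smul_e (g : PontLambdaDual p →ₗ[ZMod p] ZMod p) (a : PowerSeries (ZMod p)) (n : ℕ) :
    g (a • e p n) = ∑ k ∈ Finset.range (n + 1),
      PowerSeries.coeff k a * g (e p (n - k)) := by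
  have h1 : a • e p n
      = pi p ((algebraMap (PowerSeries (ZMod p)) (LaurentSeries (ZMod p)) a) *
          HahnSeries.single (-(n + 1) : ℤ) 1) := by
    rw [e, ← map_smul, Algebra.smul_def]
  rw [h1, key_decomp, map_add, pi_coe, zero_add, map_sum, map_sum]
  refine Finset.sum_congr rfl fun k hk => ?_
  have hk' : k ≤ n := by have := Finset.mem_range.mp hk; omega
  have hix : ((k : ℤ) - (n + 1)) = -(((n - k : ℕ) : ℤ) + 1) := by
    push_cast [Nat.cast_sub hk']
    ring
  rw [hix, LinearMap.map_smul_of_tower, map_smul, smul_eq_mul]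
  rfl

theorem g_eq_zero (g : PontLambdaDual p →ₗ[ZMod p] ZMod p)
    (h : ∀ n, g (e p n) = 0) : g = 0 := by
  ext q
  obtain ⟨x, rfl⟩ := pi_surjective p q
  show g (pi p x) = 0
  by_cases hx : x = 0
  · rw [hx, map_zero, map_zero]
  · have hdec := x.single_order_mul_powerSeriesPart
    have hx2 : (x.powerSeriesPart : PowerSeries (ZMod p)) •
        (HahnSeries.single x.order 1 : LaurentSeries (ZMod p)) = x := by
      rw [Algebra.smul_def, LaurentSeries.coe_algebraMap, mul_comm]
      exact hdec
    conv_lhs => rw [← hx2]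
    rw [map_smul]
    rcases le_or_gt 0 x.order with hord | hord
    · have hz : pi p (HahnSeries.single x.order 1 : LaurentSeries (ZMod p)) = 0 := by
        have hs : (HahnSeries.single x.order 1 : LaurentSeries (ZMod p))
            = algebraMap (PowerSeries (ZMod p)) (LaurentSeries (ZMod p))
                (PowerSeries.X ^ x.order.toNat) := by
          rw [LaurentSeries.coe_algebraMap, HahnSeries.ofPowerSeries_X_pow,
            Int.toNat_of_nonneg hord]
        rw [hs, pi_coe]
      rw [hz, smul_zero, map_zero]
    · have hpe : pi p (HahnSeries.single x.order 1 : LaurentSeries (ZMod p))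
          = e p (-x.order - 1).toNat := by
        rw [e, show (-((((-x.order - 1).toNat : ℕ) : ℤ) + 1)) = x.order from by omega]
      rw [hpe, smul_e]
      exact Finset.sum_eq_zero fun k _ => by rw [h, mul_zero]

variable (M : Type) [AddCommGroup M] [Module (ZMod p) M]
  [Module (PowerSeries (ZMod p)) M] [SMulCommClass (ZMod p) (PowerSeries (ZMod p)) M]

/-- An `Λ̄`-linear map, viewed as `𝔽_p`-linear. -/
noncomputable def rlin (φ : PontLambdaDual p →ₗ[PowerSeries (ZMod p)] M) :
    PontLambdaDual p →ₗ[ZMod p] M where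
  toFun := φ
  map_add' := φ.map_add
  map_smul' c x := by
    simp only [RingHom.id_apply]
    rw [zmodSmul p c x, zmodSmul p c (φ x), map_nsmul]

/-- The "Fourier coefficients" power series of a functional on `Λ̄^∨`. -/
noncomputable def psi (g : PontLambdaDual p →ₗ[ZMod p] ZMod p) : PowerSeries (ZMod p) :=
  PowerSeries.mk fun n => g (e p n)

theorem psi_of_smul (g h : PontLambdaDual p →ₗ[ZMod p] ZMod p) (a : PowerSeries (ZMod p))
    (hh : ∀ q, h q = g (a • q)) : psi p h = a * psi p g := by
  ext n
  rw [psi, PowerSeries.coeff_mk, hh, smul_e p g a n, PowerSeries.coeff_mul,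
    Finset.Nat.sum_antidiagonal_eq_sum_range_succ_mk]
  refine Finset.sum_congr rfl fun k _ => ?_
  rw [psi, PowerSeries.coeff_mk]

/-- One component of the dualized map. -/
noncomputable def Dcomp (φ : PontLambdaDual p →ₗ[PowerSeries (ZMod p)] M) :
    PDual p M →ₗ[PowerSeries (ZMod p)] PowerSeries (ZMod p) where
  toFun f := psi p ((PDual.lin p M f) ∘ₗ rlin p M φ)
  map_add' f g := by
    ext n
    simp only [psi, PowerSeries.coeff_mk, map_add]
    rfl
  map_smul' a f := by
    simp only [RingHom.id_apply, smul_eq_mul]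
    exact psi_of_smul p _ _ a fun q =>
      (congrArg (PDual.lin p M f) (map_smul φ a q)).symm

/-- The dualized map `M^∨ → Λ̄ ⊕ Λ̄`. -/
noncomputable def Dmap (φ φ' : PontLambdaDual p →ₗ[PowerSeries (ZMod p)] M) :
    PDual p M →ₗ[PowerSeries (ZMod p)] (Fin 2 → PowerSeries (ZMod p)) :=
  LinearMap.pi ![Dcomp p M φ, Dcomp p M φ']

theorem Dmap_inj (φ φ' : PontLambdaDual p →ₗ[PowerSeries (ZMod p)] M)
    (hsum : LinearMap.range φ ⊔ LinearMap.range φ' = ⊤) :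
    Function.Injective (Dmap p M φ φ') := by
  have key : ∀ f : PDual p M, Dmap p M φ φ' f = 0 → f = 0 := by
    intro f hf
    have h0 : Dcomp p M φ f = 0 := by
      have := congrFun hf 0
      simpa [Dmap, LinearMap.pi_apply] using this
    have h1 : Dcomp p M φ' f = 0 := by
      have := congrFun hf 1
      simpa [Dmap, LinearMap.pi_apply] using this
    have g0 : ((PDual.lin p M f) ∘ₗ rlin p M φ) = 0 := by
      refine g_eq_zero p _ fun n => ?_
      have := congrArg (PowerSeries.coeff n) h0
      simpa [Dcomp, psi, PowerSeries.coeff_mk] using this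
    have g1 : ((PDual.lin p M f) ∘ₗ rlin p M φ') = 0 := by
      refine g_eq_zero p _ fun n => ?_
      have := congrArg (PowerSeries.coeff n) h1
      simpa [Dcomp, psi, PowerSeries.coeff_mk] using this
    have : PDual.lin p M f = 0 := by
      apply LinearMap.ext
      intro m
      have hm : m ∈ LinearMap.range φ ⊔ LinearMap.range φ' := by
        rw [hsum]; trivial
      obtain ⟨u, hu, v, hv, rfl⟩ := Submodule.mem_sup.mp hm
      obtain ⟨qu, rfl⟩ := hu
      obtain ⟨qv, rfl⟩ := hv
      have e0 : (PDual.lin p M f) (φ qu) = 0 := LinearMap.congr_fun g0 qu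
      have e1 : (PDual.lin p M f) (φ' qv) = 0 := LinearMap.congr_fun g1 qv
      rw [map_add, e0, e1, add_zero, LinearMap.zero_apply]
    exact this
  intro a b hab
  have := key (a - b) (by rw [map_sub, hab, sub_self])
  exact sub_eq_zero.mp this

noncomputable instance : Module (ZMod p) (PDual p M) :=
  inferInstanceAs (Module (ZMod p) (M →ₗ[ZMod p] ZMod p))

/-- Multiplication by `X` on the dual, as an `𝔽_p`-linear map. -/
noncomputable def XS : PDual p M →ₗ[ZMod p] PDual p M where
  toFun f := (PowerSeries.X : PowerSeries (ZMod p)) • f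
  map_add' f g := smul_add _ f g
  map_smul' c f := by
    simp only [RingHom.id_apply]
    exact LinearMap.ext fun x => rfl

theorem m_eq {m : ℕ}
    (hinv : Module.finrank (ZMod p)
      (invariantsKer p M (PowerSeries.X : PowerSeries (ZMod p))) = 2)
    (b : Module.Basis (Fin m) (PowerSeries (ZMod p)) (PDual p M)) : m = 2 := by
  classical
  -- θ : reduction mod X in coordinates
  let θ : PDual p M →ₗ[ZMod p] (Fin m → ZMod p) :=
    { toFun := fun f i => PowerSeries.constantCoeff (b.equivFun f i)
      map_add' := fun f g => by
        funext i
        simp [map_add]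
      map_smul' := fun c f => by
        funext i
        simp only [RingHom.id_apply, Pi.smul_apply]
        rw [zmodSmul p c f, map_nsmul, Pi.smul_apply, map_nsmul, ← zmodSmul p c] }
  have hker : LinearMap.ker θ = LinearMap.range (XS p M) := by
    ext f
    constructor
    · intro hf
      have hf' : ∀ i, PowerSeries.constantCoeff (b.equivFun f i) = 0 :=
        fun i => congrFun hf i
      have hdvd : ∀ i, ∃ d, b.equivFun f i = PowerSeries.X * d := by
        intro i
        exact (PowerSeries.X_dvd_iff.mpr (hf' i))
      choose d hd using hdvd
      refine ⟨∑ i, d i • b i, ?_⟩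
      show (PowerSeries.X : PowerSeries (ZMod p)) • (∑ i, d i • b i) = f
      rw [Finset.smul_sum]
      have : ∀ i ∈ Finset.univ, (PowerSeries.X : PowerSeries (ZMod p)) • (d i • b i)
          = b.equivFun f i • b i := by
        intro i _
        rw [smul_smul, ← hd]
      rw [Finset.sum_congr rfl this, Module.Basis.sum_equivFun]
    · rintro ⟨y, rfl⟩
      have : ∀ i, PowerSeries.constantCoeff (b.equivFun (XS p M y) i) = 0 := by
        intro i
        have : b.equivFun (XS p M y) = (PowerSeries.X : PowerSeries (ZMod p)) • b.equivFun y := by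
          show b.equivFun ((PowerSeries.X : PowerSeries (ZMod p)) • y) = _
          rw [map_smul]
        rw [this, Pi.smul_apply, smul_eq_mul, map_mul, PowerSeries.constantCoeff_X, zero_mul]
      exact funext this
  have hsurjθ : Function.Surjective θ := by
    intro v
    refine ⟨b.equivFun.symm (fun i => PowerSeries.C (v i)), ?_⟩
    funext i
    show PowerSeries.constantCoeff
      (b.equivFun (b.equivFun.symm fun i => PowerSeries.C (v i)) i) = v i
    rw [LinearEquiv.apply_symm_apply]
    simp
  -- the restriction map to the dual of the invariants
  have hfd : FiniteDimensional (ZMod p)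
      (invariantsKer p M (PowerSeries.X : PowerSeries (ZMod p))) :=
    FiniteDimensional.of_finrank_eq_succ (n := 1) hinv
  let inv := invariantsKer p M (PowerSeries.X : PowerSeries (ZMod p))
  let r : PDual p M →ₗ[ZMod p] Module.Dual (ZMod p) inv :=
    { toFun := fun f => (PDual.lin p M f).comp inv.subtype
      map_add' := fun f g => rfl
      map_smul' := fun c f => rfl }
  have hsurjr : Function.Surjective r := by
    intro g
    obtain ⟨h, hh⟩ := LinearMap.exists_extend g
    exact ⟨h, hh⟩
  have hkerr : LinearMap.ker r = LinearMap.range (XS p M) := by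
    ext f
    constructor
    · intro hf
      -- f vanishes on inv, so f factors through multiplication by X
      have hle : LinearMap.ker (smulLM p M (PowerSeries.X : PowerSeries (ZMod p)))
          ≤ LinearMap.ker (PDual.lin p M f) := by
        intro m hm
        have hminv : m ∈ inv := hm
        have : r f ⟨m, hminv⟩ = 0 := by rw [hf]; rfl
        exact this
      set XM := smulLM p M (PowerSeries.X : PowerSeries (ZMod p)) with hXM
      let q := Submodule.liftQ (LinearMap.ker XM) (PDual.lin p M f) hle
      let eiso := XM.quotKerEquivRange
      obtain ⟨g, hg⟩ := LinearMap.exists_extend (q ∘ₗ eiso.symm.toLinearMap)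
      refine ⟨g, ?_⟩
      apply LinearMap.ext
      intro m
      show g ((PowerSeries.X : PowerSeries (ZMod p)) • m) = (PDual.lin p M f) m
      have h1 : g ((PowerSeries.X : PowerSeries (ZMod p)) • m)
          = (q ∘ₗ eiso.symm.toLinearMap) ⟨XM m, LinearMap.mem_range_self XM m⟩ := by
        rw [← hg]; rfl
      rw [h1]
      show q (eiso.symm ⟨XM m, LinearMap.mem_range_self XM m⟩) = (PDual.lin p M f) m
      rw [LinearMap.quotKerEquivRange_symm_apply_image XM m]
      exact Submodule.liftQ_apply _ _ m
    · rintro ⟨y, rfl⟩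
      apply LinearMap.ext
      intro x
      show PDual.lin p M (XS p M y) x.1 = 0
      show PDual.lin p M y ((PowerSeries.X : PowerSeries (ZMod p)) • x.1) = 0
      rw [(x.2 : (PowerSeries.X : PowerSeries (ZMod p)) • x.1 = 0), map_zero]
  -- compare the two computations of the quotient
  have E2 : (PDual p M ⧸ LinearMap.range (XS p M)) ≃ₗ[ZMod p] (Fin m → ZMod p) :=
    (Submodule.quotEquivOfEq _ _ hker.symm).trans (θ.quotKerEquivOfSurjective hsurjθ)
  have E1 : (PDual p M ⧸ LinearMap.range (XS p M)) ≃ₗ[ZMod p] Module.Dual (ZMod p) inv :=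
    (Submodule.quotEquivOfEq _ _ hkerr.symm).trans (r.quotKerEquivOfSurjective hsurjr)
  have h2 : Module.finrank (ZMod p) (Module.Dual (ZMod p) inv) = 2 := by
    rw [Subspace.dual_finrank_eq]
    exact hinv
  have hm2 : Module.finrank (ZMod p) (PDual p M ⧸ LinearMap.range (XS p M)) = 2 := by
    rw [E1.finrank_eq, h2]
  have hmm : Module.finrank (ZMod p) (PDual p M ⧸ LinearMap.range (XS p M)) = m := by
    rw [E2.finrank_eq]
    simp [Module.finrank_fin_fun]
  rw [hm2] at hmm
  exact hmm.symm

end DFRT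

/-- Let `Λ̄ = 𝔽_p[[T]]` and suppose the discrete `Λ̄`-module `M` is the sum of the images of
two homomorphisms `φ, φ' : Λ̄^∨ → M`.  If `dim_{𝔽_p} M^Γ = 2` (where `M^Γ = M[T]`), then the
Pontryagin dual `M^∨` is a free `Λ̄`-module of rank `2`. -/
theorem dual_free_rank_two_of_two_generators (p : ℕ) [Fact p.Prime]
    (M : Type) [AddCommGroup M] [Module (ZMod p) M] [Module (PowerSeries (ZMod p)) M]
    [SMulCommClass (ZMod p) (PowerSeries (ZMod p)) M]
    (φ φ' : PontLambdaDual p →ₗ[PowerSeries (ZMod p)] M)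
    (hsum : LinearMap.range φ ⊔ LinearMap.range φ' = ⊤)
    (hinv : Module.finrank (ZMod p)
      (invariantsKer p M (PowerSeries.X : PowerSeries (ZMod p))) = 2) :
    Module.Free (PowerSeries (ZMod p)) (PDual p M) ∧
      Module.rank (PowerSeries (ZMod p)) (PDual p M) = 2 := by
  classical
  have hinj := DFRT.Dmap_inj p M φ φ' hsum
  obtain ⟨m, bN⟩ := Submodule.basisOfPid (Pi.basisFun (PowerSeries (ZMod p)) (Fin 2))
    (LinearMap.range (DFRT.Dmap p M φ φ'))
  let eiso : PDual p M ≃ₗ[PowerSeries (ZMod p)] LinearMap.range (DFRT.Dmap p M φ φ') :=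
    LinearEquiv.ofInjective _ hinj
  let b : Module.Basis (Fin m) (PowerSeries (ZMod p)) (PDual p M) := bN.map eiso.symm
  have hm : m = 2 := DFRT.m_eq p M hinv b
  refine ⟨Module.Free.of_basis b, ?_⟩
  rw [rank_eq_card_basis b, Fintype.card_fin, hm]
  norm_num
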